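/- Let r₃(1) be the complex Lie algebra with basis e₁,e₂,e₃ and nonzero brackets [e₁,e₂]=e₂, [e₁,e₃]=e₃. If f,g : r₃(1) → r₃(1) are linear maps satisfying f([a,b]) = [f(a),b] + [a,f(b)] - [a,g(b)] for all a,b, then there exist β₁,...,β₇ ∈ ℂ such that f(e₁)=β₁e₁+β₂e₂+β₃e₃, f(e₂)=β₄e₂+β₆e₃, f(e₃)=β₇e₂+β₅e₃, and g = β₁·id. -/

import Mathlib

/-- Description of the pairs `(f, g)` satisfying the compatibility condition on
`r₃(1)`: `[e₁,e₂]=e₂`, `[e₁,e₃]=e₃`. -/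
theorem stmt11 {L : Type*} [LieRing L] [LieAlgebra ℂ L]
    (b : Module.Basis (Fin 3) ℂ L)
    (h12 : ⁅b 0, b 1⁆ = b 1) (h13 : ⁅b 0, b 2⁆ = b 2)
    (h23 : ⁅b 1, b 2⁆ = 0)
    (f g : L →ₗ[ℂ] L)
    (hfg : ∀ a c : L, f ⁅a, c⁆ = ⁅f a, c⁆ + ⁅a, f c⁆ - ⁅a, g c⁆) :
    ∃ β₁ β₂ β₃ β₄ β₅ β₆ β₇ : ℂ,
      f (b 0) = β₁ • b 0 + β₂ • b 1 + β₃ • b 2 ∧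
      f (b 1) = β₄ • b 1 + β₆ • b 2 ∧
      f (b 2) = β₇ • b 1 + β₅ • b 2 ∧
      ∀ x : L, g x = β₁ • x := by
  have h21 : ⁅b 1, b 0⁆ = -b 1 := by rw [← lie_skew, h12]
  have h31 : ⁅b 2, b 0⁆ = -b 2 := by rw [← lie_skew, h13]
  have h32 : ⁅b 2, b 1⁆ = 0 := by rw [← lie_skew, h23, neg_zero]
  have hx : ∀ x : L, x = b.repr x 0 • b 0 + b.repr x 1 • b 1 + b.repr x 2 • b 2 := by
    intro x
    conv_lhs => rw [← b.sum_repr x]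
    rw [Fin.sum_univ_three]
  have key0 : ∀ x : L, ⁅b 0, x⁆ = b.repr x 1 • b 1 + b.repr x 2 • b 2 := by
    intro x
    conv_lhs => rw [hx x]
    simp [h12, h13]
  have key1 : ∀ x : L, ⁅b 1, x⁆ = -(b.repr x 0 • b 1) := by
    intro x
    conv_lhs => rw [hx x]
    simp [h21, h23]
  have key2 : ∀ x : L, ⁅b 2, x⁆ = -(b.repr x 0 • b 2) := by
    intro x
    conv_lhs => rw [hx x]
    simp [h31, h32]
  have keyR0 : ∀ x : L, ⁅x, b 0⁆ = -(b.repr x 1 • b 1) - b.repr x 2 • b 2 := by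
    intro x; rw [← lie_skew, key0]; abel
  have keyR1 : ∀ x : L, ⁅x, b 1⁆ = b.repr x 0 • b 1 := by
    intro x; rw [← lie_skew, key1, neg_neg]
  have keyR2 : ∀ x : L, ⁅x, b 2⁆ = b.repr x 0 • b 2 := by
    intro x; rw [← lie_skew, key2, neg_neg]
  set α0 := b.repr (f (b 0)) 0 with hα0
  -- from hfg (b 0) (b 1)
  have E01 := hfg (b 0) (b 1)
  rw [h12, keyR1 (f (b 0)), key0 (f (b 1)), key0 (g (b 1))] at E01
  have A : b.repr (f (b 1)) 0 = 0 := by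
    have := congrArg (fun y => b.repr y 0) E01
    simpa [Finsupp.single_apply] using this
  have B : b.repr (g (b 1)) 1 = α0 := by
    have := congrArg (fun y => b.repr y 1) E01
    simp [Finsupp.single_apply] at this
    linear_combination this
  have C : b.repr (g (b 1)) 2 = 0 := by
    have := congrArg (fun y => b.repr y 2) E01
    simp [Finsupp.single_apply] at this
    linear_combination this
  -- from hfg (b 0) (b 2)
  have E02 := hfg (b 0) (b 2)
  rw [h13, keyR2 (f (b 0)), key0 (f (b 2)), key0 (g (b 2))] at E02
  have D : b.repr (f (b 2)) 0 = 0 := by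
    have := congrArg (fun y => b.repr y 0) E02
    simpa [Finsupp.single_apply] using this
  have Eg : b.repr (g (b 2)) 2 = α0 := by
    have := congrArg (fun y => b.repr y 2) E02
    simp [Finsupp.single_apply] at this
    linear_combination this
  have Fg : b.repr (g (b 2)) 1 = 0 := by
    have := congrArg (fun y => b.repr y 1) E02
    simp [Finsupp.single_apply] at this
    linear_combination this
  -- from hfg (b 1) (b 2)
  have E12 := hfg (b 1) (b 2)
  rw [h23, map_zero, keyR2 (f (b 1)), key1 (f (b 2)), key1 (g (b 2))] at E12
  have G20 : b.repr (g (b 2)) 0 = 0 := by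
    have := congrArg (fun y => b.repr y 1) E12
    simp [Finsupp.single_apply] at this
    linear_combination D - this
  -- from hfg (b 2) (b 1)
  have E21 := hfg (b 2) (b 1)
  rw [h32, map_zero, keyR1 (f (b 2)), key2 (f (b 1)), key2 (g (b 1))] at E21
  have G10 : b.repr (g (b 1)) 0 = 0 := by
    have := congrArg (fun y => b.repr y 2) E21
    simp [Finsupp.single_apply] at this
    linear_combination A - this
  -- from hfg (b 0) (b 0)
  have E00 := hfg (b 0) (b 0)
  rw [lie_self, map_zero, keyR0 (f (b 0)), key0 (f (b 0)), key0 (g (b 0))] at E00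
  have G01 : b.repr (g (b 0)) 1 = 0 := by
    have := congrArg (fun y => b.repr y 1) E00
    simp [Finsupp.single_apply] at this
    linear_combination this
  have G02 : b.repr (g (b 0)) 2 = 0 := by
    have := congrArg (fun y => b.repr y 2) E00
    simp [Finsupp.single_apply] at this
    linear_combination this
  -- from hfg (b 1) (b 0)
  have E10 := hfg (b 1) (b 0)
  rw [h21, map_neg, keyR0 (f (b 1)), key1 (f (b 0)), key1 (g (b 0))] at E10
  have G00 : b.repr (g (b 0)) 0 = α0 := by
    have := congrArg (fun y => b.repr y 1) E10
    simp [Finsupp.single_apply] at this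
    linear_combination -this
  refine ⟨α0, b.repr (f (b 0)) 1, b.repr (f (b 0)) 2, b.repr (f (b 1)) 1,
    b.repr (f (b 2)) 2, b.repr (f (b 1)) 2, b.repr (f (b 2)) 1, hx (f (b 0)), ?_, ?_, ?_⟩
  · rw [hx (f (b 1)), A]; simp
  · rw [hx (f (b 2)), D]; simp
  · have hg : g = α0 • (LinearMap.id : L →ₗ[ℂ] L) := by
      apply b.ext
      intro i
      fin_cases i
      · show g (b 0) = α0 • b 0
        rw [hx (g (b 0)), G00, G01, G02]; simp
      · show g (b 1) = α0 • b 1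
        rw [hx (g (b 1)), G10, B, C]; simp
      · show g (b 2) = α0 • b 2
        rw [hx (g (b 2)), G20, Fg, Eg]; simp
    intro x
    rw [hg]
    simp
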